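/- Let Ω be a measurable space and μ a probability measure on Ω × Bool. Let λ be the pushforward of μ under the first projection, let ν be the measure on Ω defined by ν(A) = μ(A × {true}), and let η : Ω → ℝ be the (λ-a.e. defined, [0,1]-valued) Radon–Nikodym derivative of ν with respect to λ. Define the Bayes classifier g* : Ω → Bool by g*(x) = true if and only if η(x) ≥ 1/2. Then for every measurable classifier g : Ω → Bool, μ{(x,y) : g*(x) ≠ y} ≤ μ{(x,y) : g(x) ≠ y}. -/

import Mathlib

open MeasureTheory

/-- Optimality of the Bayes classifier: the classifier `g*` defined from the
regression function `η = dν/dλ` by `g*(x) = true ↔ η(x) ≥ 1/2` has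
misclassification error no larger than that of any measurable classifier. -/
theorem bayes_classifier_optimal
    {Ω : Type*} [MeasurableSpace Ω]
    (μ : Measure (Ω × Bool)) [IsProbabilityMeasure μ]
    (lam : Measure Ω) (hlam : lam = μ.map Prod.fst)
    (ν : Measure Ω)
    (hν : ∀ A : Set Ω, MeasurableSet A → ν A = μ (A ×ˢ ({true} : Set Bool)))
    (η : Ω → ℝ) (hη : ∀ x, η x = (ν.rnDeriv lam x).toReal)
    (gstar : Ω → Bool) (hgstar : ∀ x, gstar x = true ↔ (1/2 : ℝ) ≤ η x)
    (g : Ω → Bool) (hg : Measurable g) :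
    μ {p : Ω × Bool | gstar p.1 ≠ p.2} ≤ μ {p : Ω × Bool | g p.1 ≠ p.2} := by
  classical
  have hfst : Measurable (Prod.fst : Ω × Bool → Ω) := measurable_fst
  have hlamP : IsProbabilityMeasure lam := by
    rw [hlam]; exact Measure.isProbabilityMeasure_map hfst.aemeasurable
  have hνle : ν ≤ lam := by
    refine Measure.le_iff.2 fun A hA => ?_
    rw [hν A hA, hlam, Measure.map_apply hfst hA]
    exact measure_mono (by rintro ⟨x, y⟩ ⟨hx, _⟩; exact hx)
  have hνfin : IsFiniteMeasure ν :=
    ⟨lt_of_le_of_lt (Measure.le_iff'.mp hνle Set.univ) (measure_lt_top lam Set.univ)⟩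
  set f := ν.rnDeriv lam with hf
  have hfmeas : Measurable f := Measure.measurable_rnDeriv ν lam
  have hle1 : f ≤ᵐ[lam] 1 := Measure.rnDeriv_le_one_of_le hνle
  have hwd : lam.withDensity f = ν :=
    Measure.withDensity_rnDeriv_eq ν lam hνle.absolutelyContinuous
  have hint : ∀ A : Set Ω, MeasurableSet A → ∫⁻ x in A, f x ∂lam = ν A := by
    intro A hA; rw [← hwd, withDensity_apply _ hA]
  -- the error formula
  have key : ∀ (A : Set Ω), MeasurableSet A → ∀ h : Ω → Bool,
      (∀ x, h x = true ↔ x ∈ A) →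
      μ {p : Ω × Bool | h p.1 ≠ p.2}
        = ∫⁻ x, (if x ∈ A then 1 - f x else f x) ∂lam := by
    intro A hA h hhA
    have hset : {p : Ω × Bool | h p.1 ≠ p.2}
        = (Aᶜ ×ˢ ({true} : Set Bool)) ∪ (A ×ˢ ({false} : Set Bool)) := by
      ext ⟨x, y⟩
      cases y <;> simp [Set.mem_prod, hhA, Bool.eq_false_iff]
    have hdisj : Disjoint (Aᶜ ×ˢ ({true} : Set Bool)) (A ×ˢ ({false} : Set Bool)) := by
      rw [Set.disjoint_left]; rintro ⟨x, y⟩ ⟨hx, hy⟩ ⟨hx', hy'⟩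
      simp only [Set.mem_singleton_iff] at hy hy'
      rw [hy] at hy'; exact Bool.noConfusion hy'
    have hmeas2 : MeasurableSet (A ×ˢ ({false} : Set Bool)) :=
      hA.prod (measurableSet_singleton false)
    have hμun : μ {p : Ω × Bool | h p.1 ≠ p.2}
        = μ (Aᶜ ×ˢ ({true} : Set Bool)) + μ (A ×ˢ ({false} : Set Bool)) := by
      rw [hset, measure_union hdisj hmeas2]
    -- lam A = ν A + μ (A × {false})
    have hsplit : lam A = ν A + μ (A ×ˢ ({false} : Set Bool)) := by
      have h1 : Prod.fst ⁻¹' A = A ×ˢ (Set.univ : Set Bool) := by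
        ext ⟨x, y⟩; simp
      have h2 : A ×ˢ (Set.univ : Set Bool)
          = (A ×ˢ ({true} : Set Bool)) ∪ (A ×ˢ ({false} : Set Bool)) := by
        ext ⟨x, y⟩; cases y <;> simp
      have hd : Disjoint (A ×ˢ ({true} : Set Bool)) (A ×ˢ ({false} : Set Bool)) := by
        rw [Set.disjoint_left]; rintro ⟨x, y⟩ ⟨hx, hy⟩ ⟨hx', hy'⟩
        simp only [Set.mem_singleton_iff] at hy hy'
        rw [hy] at hy'; exact Bool.noConfusion hy'
      rw [hlam, Measure.map_apply hfst hA, h1, h2, measure_union hd hmeas2, ← hν A hA]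
    have hfalse : μ (A ×ˢ ({false} : Set Bool)) = lam A - ν A := by
      rw [hsplit]; rw [ENNReal.add_sub_cancel_left (measure_ne_top ν A)]
    -- integral computation
    rw [hμun, ← hν Aᶜ hA.compl, hfalse, ← hint Aᶜ hA.compl]
    have hA1 : ∫⁻ x in A, (if x ∈ A then 1 - f x else f x) ∂lam
        = ∫⁻ x in A, (1 - f x) ∂lam := by
      refine setLIntegral_congr_fun hA (fun x hx => ?_)
      simp [hx]
    have hA2 : ∫⁻ x in Aᶜ, (if x ∈ A then 1 - f x else f x) ∂lam
        = ∫⁻ x in Aᶜ, f x ∂lam := by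
      refine setLIntegral_congr_fun hA.compl (fun x hx => ?_)
      simp [show x ∉ A from hx]
    have hsub : ∫⁻ x in A, (1 - f x) ∂lam = lam A - ν A := by
      have hfin : ∫⁻ x in A, f x ∂lam ≠ ⊤ := by
        rw [hint A hA]; exact measure_ne_top ν A
      have hle : f ≤ᵐ[lam.restrict A] fun _ => (1 : ENNReal) :=
        ae_restrict_of_ae hle1
      rw [lintegral_sub (f := fun _ => (1 : ENNReal)) hfmeas hfin hle]  -- gives ∫ 1 - ∫ f
      rw [setLIntegral_one, hint A hA]
    rw [← hsub, ← hA1, ← hA2, add_comm]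
    exact lintegral_add_compl _ hA
  -- apply to both classifiers
  have hAstar : MeasurableSet {x | (1/2 : ℝ) ≤ η x} := by
    have : Measurable η := by
      have := hfmeas.ennreal_toReal
      simpa [funext hη] using this
    exact measurableSet_le measurable_const this
  have hstar := key {x | (1/2 : ℝ) ≤ η x} hAstar gstar (fun x => by
    simpa using hgstar x)
  have hgkey := key {x | g x = true} (hg (measurableSet_singleton true)) g
    (fun x => Iff.rfl)
  rw [hstar, hgkey]
  refine lintegral_mono_ae ?_
  filter_upwards [hle1] with x hx1
  have hx1 : f x ≤ 1 := by simpa using hx1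
  have hfx_ne : f x ≠ ⊤ := (hx1.trans_lt ENNReal.one_lt_top).ne
  have hhalf : ENNReal.ofReal (1/2 : ℝ) = (1/2 : ENNReal) := by
    rw [ENNReal.ofReal_div_of_pos (by norm_num)]
    norm_num
  split_ifs with h1 h2 h2
  · exact le_rfl
  · have hge : (1/2 : ENNReal) ≤ f x := by
      rw [← hhalf, ENNReal.ofReal_le_iff_le_toReal hfx_ne, ← hη x]
      exact h1
    rw [tsub_le_iff_right]
    calc (1 : ENNReal) = 1/2 + 1/2 := (ENNReal.add_halves 1).symm
    _ ≤ f x + f x := add_le_add hge hge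
  · have hlt : f x ≤ (1/2 : ENNReal) := by
      rw [← hhalf]
      refine le_of_lt ?_
      rw [ENNReal.lt_ofReal_iff_toReal_lt hfx_ne, ← hη x]
      exact not_le.mp h1
    refine ENNReal.le_sub_of_add_le_right hfx_ne ?_
    calc f x + f x ≤ 1/2 + 1/2 := add_le_add hlt hlt
    _ = 1 := ENNReal.add_halves 1
  · exact le_rfl
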